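/- arXiv:1905.11981 — 2 statements merged into one kernel-verified Lean document; each statement's English description precedes it below -/
import Mathlib

section
/- Let k ≥ 2 be an integer. For any x₁, …, x_r ∈ ℚ there exists a constant C ≥ 0 such that the following is true: whenever α₁, …, α_r ∈ ℕ₀ satisfy Σ_{i=1}^r x_i k^{α_i} = 0, there exist a partition {1,…,r} = I₁ ∪ ⋯ ∪ I_s into nonempty pairwise disjoint sets and γ₁, …, γ_s ∈ ℕ₀ such that Σ_{i ∈ I_j} x_i k^{α_i} = 0 for every j ∈ {1,…,s}, and |γ_j − α_i| < C for all i ∈ I_j and all j ∈ {1,…,s}. -/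
open scoped BigOperators

namespace MultAuto

/-- Base-`k` value of a word over `Σ_k` (most significant digit first); `[ε]_k = 0`. -/
def valk (k : ℕ) (u : List ℕ) : ℕ := u.foldl (fun acc d => k * acc + d) 0

/-- `u` is a word over the alphabet `Σ_k = {0,…,k-1}`. -/
def IsWord (k : ℕ) (u : List ℕ) : Prop := ∀ d ∈ u, d < k

/-- `u` has no leading zeros (the empty word qualifies). -/
def NoLeadZero : List ℕ → Prop
  | [] => True
  | d :: _ => d ≠ 0

/-- `wpow v l` is the `l`-fold concatenation `v^l`. -/
def wpow (v : List ℕ) (l : ℕ) : List ℕ := (List.replicate l v).flatten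

/-- Transition function of a word: `δ_{uv} = δ_u ∘ δ_v`. -/
def deltaW {S : Type*} (δ : ℕ → S → S) : List ℕ → S → S
  | [] => id
  | d :: t => δ d ∘ deltaW δ t

/-- `a : ℕ → ℂ` is a `k`-automatic sequence. -/
def IsAutomatic (k : ℕ) (a : ℕ → ℂ) : Prop :=
  ∃ (S : Type) (_ : Fintype S) (s₀ : S) (δ : ℕ → S → S) (τ : S → ℂ),
    ∀ u : List ℕ, IsWord k u → NoLeadZero u → a (valk k u) = τ (deltaW δ u s₀)

/-- `a` is multiplicative: `a (m n) = a m * a n` for coprime positive `m, n`. -/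
def IsMult (a : ℕ → ℂ) : Prop :=
  ∀ m n : ℕ, 0 < m → 0 < n → Nat.Coprime m n → a (m * n) = a m * a n

/-- The word `u_r v_r^{l_r} u_{r-1} ⋯ u_1 v_1^{l_1} u_0`. -/
def aridWord (u v : ℕ → List ℕ) (l : ℕ → ℕ) : ℕ → List ℕ
  | 0 => u 0
  | r + 1 => u (r + 1) ++ wpow (v (r + 1)) (l (r + 1)) ++ aridWord u v l r

/-- `A` is a basic arid set of rank ≤ r in base k. -/
def BasicArid (k r : ℕ) (A : Set ℕ) : Prop :=
  ∃ u v : ℕ → List ℕ, (∀ i, IsWord k (u i)) ∧ (∀ i, IsWord k (v i)) ∧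
    A = {n | ∃ l : ℕ → ℕ, n = valk k (aridWord u v l r)}

/-- `A` is an arid set of rank ≤ r: a finite union of basic arid sets of rank ≤ r. -/
def AridOfRank (k r : ℕ) (A : Set ℕ) : Prop :=
  ∃ (m : ℕ) (B : Fin m → Set ℕ), (∀ j, BasicArid k r (B j)) ∧ A = ⋃ j, B j

/-- `A` is arid (in base `k`). -/
def Arid (k : ℕ) (A : Set ℕ) : Prop := ∃ r, AridOfRank k r A

/-- `χ : ℕ → ℂ` is a Dirichlet character of modulus `m`: completely multiplicative,
`m`-periodic, and nonvanishing exactly at integers coprime to `m`. -/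
def IsDirichletLike (m : ℕ) (χ : ℕ → ℂ) : Prop :=
  0 < m ∧ (∀ a b : ℕ, 0 < a → 0 < b → χ (a * b) = χ a * χ b) ∧
  (∀ n : ℕ, 0 < n → χ (n + m) = χ n) ∧
  (∀ n : ℕ, 0 < n → (χ n ≠ 0 ↔ Nat.Coprime n m))

/-- `(n)_k^l`: the last `l` base-`k` digits of `n`, padded with leading zeros,
most significant digit first. -/
def padk (k l n : ℕ) : List ℕ := (List.range l).reverse.map fun i => n / k ^ i % k

/-- The equivalence `n₁ ∼ n₂` on `ℕ` induced by the transition maps `δ`. -/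
def EqvN (k : ℕ) {S : Type*} (δ : ℕ → S → S) (n₁ n₂ : ℕ) : Prop :=
  ∃ l₀ : ℕ, ∀ l ≥ l₀, deltaW δ (padk k l n₁) = deltaW δ (padk k l n₂)

/-- `E ⊆ ℕ` has upper Banach density zero. -/
def UpperBanachDensityZero (E : Set ℕ) : Prop :=
  ∀ ε : ℝ, 0 < ε → ∃ N₀ : ℕ, ∀ N ≥ N₀, ∀ M : ℕ,
    ((E ∩ Set.Ico M (M + N)).ncard : ℝ) ≤ ε * N


lemma int_split (k : ℕ) (hk : 2 ≤ k) (z : ℕ → ℤ) (α : ℕ → ℕ) (L H : Finset ℕ) (t D : ℕ)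
    (hL : ∀ i ∈ L, α i < t) (hH : ∀ i ∈ H, t + D ≤ α i)
    (hB : ∑ i ∈ L, |z i| < (k : ℤ) ^ D)
    (hsum : ∑ i ∈ L, z i * (k : ℤ) ^ α i + ∑ i ∈ H, z i * (k : ℤ) ^ α i = 0) :
    ∑ i ∈ L, z i * (k : ℤ) ^ α i = 0 := by
  have hk1 : (1 : ℤ) ≤ (k : ℤ) := by exact_mod_cast hk.trans' (by norm_num)
  have hk0 : (0 : ℤ) < (k : ℤ) := by linarith
  rcases Nat.eq_zero_or_pos t with ht | ht
  · have : L = ∅ := Finset.eq_empty_of_forall_notMem fun i hi => by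
      have := hL i hi; omega
    simp [this]
  have hdvd : ((k : ℤ) ^ (t + D)) ∣ ∑ i ∈ L, z i * (k : ℤ) ^ α i := by
    have he : ∑ i ∈ L, z i * (k : ℤ) ^ α i = -∑ i ∈ H, z i * (k : ℤ) ^ α i := by linarith
    rw [he]
    exact dvd_neg.mpr (Finset.dvd_sum fun i hi =>
      Dvd.dvd.mul_left (pow_dvd_pow _ (hH i hi)) _)
  refine Int.eq_zero_of_abs_lt_dvd hdvd ?_
  calc |∑ i ∈ L, z i * (k : ℤ) ^ α i| ≤ ∑ i ∈ L, |z i * (k : ℤ) ^ α i| :=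
        Finset.abs_sum_le_sum_abs _ _
    _ ≤ ∑ i ∈ L, |z i| * (k : ℤ) ^ (t - 1) := by
        refine Finset.sum_le_sum fun i hi => ?_
        rw [abs_mul, abs_pow, abs_of_nonneg (le_of_lt hk0)]
        exact mul_le_mul_of_nonneg_left (pow_le_pow_right₀ hk1 (by have := hL i hi; omega))
          (abs_nonneg _)
    _ = (∑ i ∈ L, |z i|) * (k : ℤ) ^ (t - 1) := by rw [Finset.sum_mul]
    _ < (k : ℤ) ^ D * (k : ℤ) ^ (t - 1) :=
        mul_lt_mul_of_pos_right hB (pow_pos hk0 _)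
    _ = (k : ℤ) ^ (D + (t - 1)) := by rw [pow_add]
    _ ≤ (k : ℤ) ^ (t + D) := pow_le_pow_right₀ hk1 (by omega)

lemma main_split (k : ℕ) (hk : 2 ≤ k) (z : ℕ → ℤ) (α : ℕ → ℕ) (D r : ℕ) (hD : 1 ≤ D)
    (hB : (∑ i ∈ Finset.Icc 1 r, |z i|) < (k : ℤ) ^ D) :
    ∀ n : ℕ, ∀ F : Finset ℕ, F.card ≤ n → F ⊆ Finset.Icc 1 r →
      ∑ i ∈ F, z i * (k : ℤ) ^ α i = 0 →
      ∃ P : Finset (Finset ℕ),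
        (∀ p ∈ P, p.Nonempty) ∧ (∀ p ∈ P, p ⊆ F) ∧
        (∀ p ∈ P, ∀ q ∈ P, p ≠ q → Disjoint p q) ∧
        P.biUnion id = F ∧
        (∀ p ∈ P, ∑ i ∈ p, z i * (k : ℤ) ^ α i = 0) ∧
        (∀ p ∈ P, ∃ γ : ℕ, ∀ i ∈ p, γ ≤ α i ∧ α i < γ + D * p.card) := by
  intro n
  induction n with
  | zero =>
    intro F hcard _ _
    have hF : F = ∅ := Finset.card_eq_zero.mp (Nat.le_zero.mp hcard)
    exact ⟨∅, by simp [hF]⟩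
  | succ n ih =>
    intro F hcard hsub hsum
    rcases Finset.eq_empty_or_nonempty F with hF | hF
    · exact ⟨∅, by simp [hF]⟩
    obtain ⟨imin, himin, hmin⟩ := F.exists_min_image α hF
    set m := α imin with hm
    by_cases hcase : ∀ i ∈ F, α i < m + D * F.card
    · refine ⟨{F}, ?_, ?_, ?_, ?_, ?_, ?_⟩
      · intro p hp; rw [Finset.mem_singleton] at hp; exact hp ▸ hF
      · intro p hp; rw [Finset.mem_singleton] at hp; exact hp ▸ le_refl F
      · intro p hp q hq hpq
        rw [Finset.mem_singleton] at hp hq; exact absurd (hp.trans hq.symm) hpq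
      · simp
      · intro p hp; rw [Finset.mem_singleton] at hp; exact hp ▸ hsum
      · intro p hp; rw [Finset.mem_singleton] at hp
        exact ⟨m, fun i hi => ⟨hmin i (hp ▸ hi), hp ▸ hcase i (hp ▸ hi)⟩⟩
    push_neg at hcase
    obtain ⟨i₀, hi₀, hα₀⟩ := hcase
    set c := F.card with hc
    have hi0min : imin ≠ i₀ := by
      intro h; rw [h] at hm
      have : 1 ≤ D * c := Nat.one_le_iff_ne_zero.mpr (by
        have : 0 < c := Finset.card_pos.mpr hF
        positivity)
      omega
    have hc2 : 2 ≤ c := Finset.one_lt_card.mpr ⟨imin, himin, i₀, hi₀, hi0min⟩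
    -- pigeonhole: find j ∈ [1, c-1] with no i ∈ F having (α i - m)/D = j
    have hpig : ∃ j, 1 ≤ j ∧ j ≤ c - 1 ∧ ∀ i ∈ F, (α i - m) / D ≠ j := by
      by_contra hcon
      push_neg at hcon
      have hw : ∀ j : ℕ, ∃ i, j ∈ Finset.Icc 1 (c - 1) → i ∈ F ∧ (α i - m) / D = j := by
        intro j
        by_cases hj : j ∈ Finset.Icc 1 (c - 1)
        · rw [Finset.mem_Icc] at hj
          obtain ⟨i, hi, hfi⟩ := hcon j hj.1 hj.2
          exact ⟨i, fun _ => ⟨hi, hfi⟩⟩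
        · exact ⟨0, fun h => absurd h hj⟩
      choose w hw using hw
      have hf0 : (α i₀ - m) / D ≥ c := by
        rw [ge_iff_le, Nat.le_div_iff_mul_le hD]
        have : D * c = c * D := Nat.mul_comm _ _
        omega
      have hfmin : (α imin - m) / D = 0 := by
        simp [hm]
      have hmap : ∀ jj ∈ Finset.Icc 1 (c - 1), w jj ∈ (F.erase imin).erase i₀ := by
        intro jj hjj
        obtain ⟨hwF, hwf⟩ := hw jj hjj
        rw [Finset.mem_Icc] at hjj
        refine Finset.mem_erase.mpr ⟨?_, Finset.mem_erase.mpr ⟨?_, hwF⟩⟩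
        · intro h; rw [h] at hwf; omega
        · intro h; rw [h] at hwf; omega
      have hinj : Set.InjOn w ↑(Finset.Icc 1 (c - 1)) := by
        intro j1 h1 j2 h2 he
        have e1 := (hw j1 h1).2
        have e2 := (hw j2 h2).2
        rw [he] at e1; omega
      have hcle := Finset.card_le_card_of_injOn w hmap hinj
      have hiE : i₀ ∈ F.erase imin := Finset.mem_erase.mpr ⟨fun h => hi0min h.symm, hi₀⟩
      have hc1 : ((F.erase imin).erase i₀).card = c - 2 := by
        rw [Finset.card_erase_of_mem hiE, Finset.card_erase_of_mem himin]
        omega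
      have hc0 : (Finset.Icc 1 (c - 1)).card = c - 1 := by
        rw [Nat.card_Icc]; omega
      omega
    obtain ⟨j, hj1, hj2, hgap⟩ := hpig
    set t := m + j * D with ht
    set L := F.filter (fun i => α i < t) with hLdef
    set H := F.filter (fun i => ¬ α i < t) with hHdef
    have hLF : L ⊆ F := Finset.filter_subset _ _
    have hHF : H ⊆ F := Finset.filter_subset _ _
    have hLmem : ∀ i ∈ L, α i < t := fun i hi => (Finset.mem_filter.mp hi).2
    have hHmem : ∀ i ∈ H, t + D ≤ α i := by
      intro i hi
      have hiF := (Finset.mem_filter.mp hi).1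
      have h1 : t ≤ α i := not_lt.mp (Finset.mem_filter.mp hi).2
      have h2 : (α i - m) / D ≠ j := hgap i hiF
      have h3 : j ≤ (α i - m) / D := Nat.le_div_iff_mul_le (by omega) |>.mpr (by omega)
      have h4 : j + 1 ≤ (α i - m) / D := by omega
      have h5 : (j + 1) * D ≤ α i - m := (Nat.le_div_iff_mul_le (by omega)).mp h4
      have h6 : m ≤ α i := hmin i hiF
      have : (j+1) * D = j * D + D := by ring
      omega
    have hiL : imin ∈ L := Finset.mem_filter.mpr ⟨himin, by
      have : 1 ≤ j * D := Nat.one_le_iff_ne_zero.mpr (by positivity)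
      omega⟩
    have hiH : i₀ ∈ H := Finset.mem_filter.mpr ⟨hi₀, by
      have : j * D ≤ c * D := Nat.mul_le_mul_right D (by omega)
      have : D * c = c * D := Nat.mul_comm _ _
      omega⟩
    have hLH : Disjoint L H := Finset.disjoint_filter_filter_not F F _
    have hunion : L ∪ H = F := Finset.filter_union_filter_not_eq _ F
    have hsplit : ∑ i ∈ L, z i * (k:ℤ) ^ α i + ∑ i ∈ H, z i * (k:ℤ) ^ α i = 0 := by
      rw [Finset.sum_filter_add_sum_filter_not]; exact hsum
    have hBL : ∑ i ∈ L, |z i| < (k : ℤ) ^ D := by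
      refine lt_of_le_of_lt ?_ hB
      exact Finset.sum_le_sum_of_subset_of_nonneg (hLF.trans hsub)
        (fun i _ _ => abs_nonneg _)
    have hLzero := int_split k hk z α L H t D hLmem hHmem hBL hsplit
    have hHzero : ∑ i ∈ H, z i * (k:ℤ) ^ α i = 0 := by linarith
    have hLcard : L.card ≤ n := by
      have : L ⊂ F := Finset.ssubset_iff_of_subset hLF |>.mpr
        ⟨i₀, hi₀, fun h => Finset.disjoint_left.mp hLH h hiH⟩
      have := Finset.card_lt_card this; omega
    have hHcard : H.card ≤ n := by
      have : H ⊂ F := Finset.ssubset_iff_of_subset hHF |>.mpr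
        ⟨imin, himin, fun h => Finset.disjoint_left.mp hLH hiL h⟩
      have := Finset.card_lt_card this; omega
    obtain ⟨PL, hPL1, hPL2, hPL3, hPL4, hPL5, hPL6⟩ :=
      ih L hLcard (hLF.trans hsub) hLzero
    obtain ⟨PH, hPH1, hPH2, hPH3, hPH4, hPH5, hPH6⟩ :=
      ih H hHcard (hHF.trans hsub) hHzero
    refine ⟨PL ∪ PH, ?_, ?_, ?_, ?_, ?_, ?_⟩
    · intro p hp; rcases Finset.mem_union.mp hp with h | h
      · exact hPL1 p h
      · exact hPH1 p h
    · intro p hp; rcases Finset.mem_union.mp hp with h | h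
      · exact (hPL2 p h).trans hLF
      · exact (hPH2 p h).trans hHF
    · intro p hp q hq hpq
      rcases Finset.mem_union.mp hp with h1 | h1 <;> rcases Finset.mem_union.mp hq with h2 | h2
      · exact hPL3 p h1 q h2 hpq
      · exact (hLH.mono (hPL2 p h1) (hPH2 q h2))
      · exact (hLH.symm.mono (hPH2 p h1) (hPL2 q h2))
      · exact hPH3 p h1 q h2 hpq
    · rw [← hunion, ← hPL4, ← hPH4]
      ext a
      simp only [Finset.mem_biUnion, Finset.mem_union, id]
      constructor
      · rintro ⟨p, hp | hp, hap⟩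
        · exact Or.inl ⟨p, hp, hap⟩
        · exact Or.inr ⟨p, hp, hap⟩
      · rintro (⟨p, hp, hap⟩ | ⟨p, hp, hap⟩)
        · exact ⟨p, Or.inl hp, hap⟩
        · exact ⟨p, Or.inr hp, hap⟩
    · intro p hp; rcases Finset.mem_union.mp hp with h | h
      · exact hPL5 p h
      · exact hPH5 p h
    · intro p hp; rcases Finset.mem_union.mp hp with h | h
      · exact hPL6 p h
      · exact hPH6 p h

/-- vanishing sums `Σ x_i k^{α_i} = 0` split into vanishing subsums
with exponents clustered within a window `C` depending only on `x₁,…,x_r`. -/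
theorem stmt17 (k : ℕ) (hk : 2 ≤ k) (r : ℕ) (x : ℕ → ℚ) :
    ∃ C : ℕ, ∀ α : ℕ → ℕ,
      (∑ i ∈ Finset.Icc 1 r, x i * (k : ℚ) ^ α i) = 0 →
      ∃ (s : ℕ) (I : ℕ → Finset ℕ) (γ : ℕ → ℕ),
        (∀ j ∈ Finset.Icc 1 s, (I j).Nonempty) ∧
        (∀ j₁ ∈ Finset.Icc 1 s, ∀ j₂ ∈ Finset.Icc 1 s, j₁ ≠ j₂ → Disjoint (I j₁) (I j₂)) ∧
        (Finset.Icc 1 s).biUnion I = Finset.Icc 1 r ∧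
        (∀ j ∈ Finset.Icc 1 s, ∑ i ∈ I j, x i * (k : ℚ) ^ α i = 0) ∧
        (∀ j ∈ Finset.Icc 1 s, ∀ i ∈ I j, |(γ j : ℤ) - (α i : ℤ)| < (C : ℤ)) := by
  -- clear denominators
  set q : ℕ := ∏ i ∈ Finset.Icc 1 r, (x i).den with hqdef
  have hq0 : 0 < q := Finset.prod_pos fun i _ => (x i).pos
  have hmulden : ∀ y : ℚ, y * (y.den : ℚ) = (y.num : ℚ) := by
    intro y
    have h0 : ((y.den : ℚ)) ≠ 0 := Nat.cast_ne_zero.mpr y.den_nz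
    have := Rat.num_div_den y
    rw [div_eq_iff h0] at this
    linarith [this]
  have hzex : ∀ i : ℕ, ∃ zi : ℤ, i ∈ Finset.Icc 1 r → (zi : ℚ) = x i * (q : ℚ) := by
    intro i
    by_cases hi : i ∈ Finset.Icc 1 r
    · obtain ⟨c, hc⟩ := Finset.dvd_prod_of_mem (fun i => (x i).den) hi
      refine ⟨(x i).num * (c : ℤ), fun _ => ?_⟩
      push_cast
      rw [← hqdef] at hc
      rw [hc]
      push_cast
      rw [← hmulden (x i)]
      ring
    · exact ⟨0, fun h => absurd h hi⟩
  choose z hz using hzex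
  set B : ℕ := (∑ i ∈ Finset.Icc 1 r, |z i|).toNat with hBdef
  set D : ℕ := B + 1 with hDdef
  have hBnat : (∑ i ∈ Finset.Icc 1 r, |z i|) = (B : ℤ) := by
    rw [hBdef, Int.toNat_of_nonneg (Finset.sum_nonneg fun i _ => abs_nonneg _)]
  have hB : (∑ i ∈ Finset.Icc 1 r, |z i|) < (k : ℤ) ^ D := by
    rw [hBnat]
    have h1 : B < 2 ^ D := lt_of_lt_of_le (Nat.lt_two_pow_self (n := B)) (Nat.pow_le_pow_right (by norm_num) (by omega))
    have h2 : (2:ℕ) ^ D ≤ k ^ D := Nat.pow_le_pow_left hk D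
    exact_mod_cast lt_of_lt_of_le h1 h2
  refine ⟨D * r + 1, ?_⟩
  intro α hsum
  -- transfer the sum to ℤ
  have hint : ∑ i ∈ Finset.Icc 1 r, z i * (k : ℤ) ^ α i = 0 := by
    have hcast : ((∑ i ∈ Finset.Icc 1 r, z i * (k : ℤ) ^ α i : ℤ) : ℚ)
        = (q : ℚ) * ∑ i ∈ Finset.Icc 1 r, x i * (k : ℚ) ^ α i := by
      push_cast
      rw [Finset.mul_sum]
      refine Finset.sum_congr rfl fun i hi => ?_
      rw [hz i hi]; ring
    rw [hsum, mul_zero] at hcast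
    exact_mod_cast hcast
  obtain ⟨P, hP1, hP2, hP3, hP4, hP5, hP6⟩ :=
    main_split k hk z α D r (by omega) hB r (Finset.Icc 1 r) (by rw [Nat.card_Icc]; omega)
      le_rfl hint
  -- enumerate P
  set lst := P.toList with hlst
  set s := lst.length with hs
  set I : ℕ → Finset ℕ := fun j => lst.getD (j - 1) ∅ with hI
  have hmemP : ∀ j ∈ Finset.Icc 1 s, I j ∈ P := by
    intro j hj
    rw [Finset.mem_Icc] at hj
    have hlt : j - 1 < lst.length := by omega
    rw [hI]
    simp only
    rw [List.getD_eq_getElem lst ∅ hlt]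
    exact Finset.mem_toList.mp (List.getElem_mem hlt)
  have hinj : ∀ j₁ ∈ Finset.Icc 1 s, ∀ j₂ ∈ Finset.Icc 1 s, j₁ ≠ j₂ → I j₁ ≠ I j₂ := by
    intro j₁ h1 j₂ h2 hne
    rw [Finset.mem_Icc] at h1 h2
    have hl1 : j₁ - 1 < lst.length := by omega
    have hl2 : j₂ - 1 < lst.length := by omega
    rw [hI]; simp only
    rw [List.getD_eq_getElem lst ∅ hl1, List.getD_eq_getElem lst ∅ hl2]
    intro h
    have := (P.nodup_toList.getElem_inj_iff).mp h
    omega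
  -- choose γ per part
  have hγex : ∀ p : Finset ℕ, ∃ γp : ℕ, p ∈ P → ∀ i ∈ p, γp ≤ α i ∧ α i < γp + D * p.card := by
    intro p
    by_cases hp : p ∈ P
    · obtain ⟨γp, hγp⟩ := hP6 p hp
      exact ⟨γp, fun _ => hγp⟩
    · exact ⟨0, fun h => absurd h hp⟩
  choose g hg using hγex
  refine ⟨s, I, fun j => g (I j), ?_, ?_, ?_, ?_, ?_⟩
  · exact fun j hj => hP1 _ (hmemP j hj)
  · exact fun j₁ h1 j₂ h2 hne => hP3 _ (hmemP j₁ h1) _ (hmemP j₂ h2) (hinj j₁ h1 j₂ h2 hne)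
  · ext a
    simp only [Finset.mem_biUnion]
    constructor
    · rintro ⟨j, hj, haj⟩
      have := hmemP j hj
      rw [← hP4]
      exact Finset.mem_biUnion.mpr ⟨I j, this, haj⟩
    · intro ha
      rw [← hP4] at ha
      obtain ⟨p, hp, hap⟩ := Finset.mem_biUnion.mp ha
      obtain ⟨idx, hidx, hpe⟩ := List.mem_iff_getElem.mp (Finset.mem_toList.mpr hp)
      have hidx' : idx < lst.length := by rw [hlst]; exact hidx
      refine ⟨idx + 1, Finset.mem_Icc.mpr ⟨by omega, by omega⟩, ?_⟩
      have : I (idx + 1) = p := by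
        rw [hI]; simp only
        rw [Nat.add_sub_cancel, List.getD_eq_getElem lst ∅ hidx]
        exact hpe
      rw [this]; exact hap
  · intro j hj
    have hzero := hP5 _ (hmemP j hj)
    -- transfer back to ℚ
    have hsubI : I j ⊆ Finset.Icc 1 r := hP2 _ (hmemP j hj)
    have hcast : ((∑ i ∈ I j, z i * (k : ℤ) ^ α i : ℤ) : ℚ)
        = (q : ℚ) * ∑ i ∈ I j, x i * (k : ℚ) ^ α i := by
      push_cast
      rw [Finset.mul_sum]
      refine Finset.sum_congr rfl fun i hi => ?_
      rw [hz i (hsubI hi)]; ring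
    rw [hzero] at hcast
    have hq0' : (q : ℚ) ≠ 0 := Nat.cast_ne_zero.mpr (by omega)
    have h0 : (q : ℚ) * ∑ i ∈ I j, x i * (k : ℚ) ^ α i = 0 := by
      rw [← hcast]; norm_num
    rcases mul_eq_zero.mp h0 with h | h
    · exact absurd h hq0'
    · exact h
  · intro j hj i hi
    have hmem := hmemP j hj
    obtain ⟨hle, hlt⟩ := hg (I j) hmem i hi
    have hcard : (I j).card ≤ r := by
      have := Finset.card_le_card (hP2 _ hmem)
      rwa [Nat.card_Icc, Nat.add_sub_cancel] at this
    have hlt2 : α i < g (I j) + D * r :=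
      lt_of_lt_of_le hlt (by exact Nat.add_le_add_left (Nat.mul_le_mul_left D hcard) _)
    obtain ⟨E, hE⟩ : ∃ E, E = D * r := ⟨_, rfl⟩
    rw [← hE] at hlt2 ⊢
    rw [abs_lt]
    constructor <;> push_cast <;> omega

end MultAuto
end

section
/- Let k ≥ 2 be an integer and let A be a restricted generalised geometric progression of rank ≤ r in base k, A = { x₀ + Σ_{i=1}^r x_i k^{α_i} : α₁ ∈ F₁, α₂ ∈ F₂(α₁), …, α_r ∈ F_r(α₁,…,α_{r−1}) }. If the admissible parameter tuples (α₁,…,α_r) are coloured with finitely many colours (equivalently, if A is covered by finitely many sets in a way assigning a class to each admissible tuple), then there exist restriction maps F′₁, F′₂(·), …, F′_r(·), with each F′_i(α₁,…,α_{i−1}) an infinite subset of F_i(α₁,…,α_{i−1}), such that all admissible tuples of the restricted system receive the same colour; in particular, restricted generalised geometric progressions of rank ≤ r with fixed coefficients x₀,…,x_r are partition regular. -/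
open scoped BigOperators

namespace MultAuto

private lemma pigeon {κ : Type} [Finite κ] (S : Set ℕ) (hS : S.Infinite) (f : ℕ → κ) :
    ∃ c, {n | n ∈ S ∧ f n = c}.Infinite := by
  by_contra h
  push_neg at h
  have hsub : S ⊆ ⋃ c : κ, {n | n ∈ S ∧ f n = c} :=
    fun n hn => Set.mem_iUnion.2 ⟨f n, hn, rfl⟩
  exact (hS.mono hsub) (Set.finite_iUnion fun c => h c)

private theorem key (r : ℕ) : ∀ (F : ℕ → (ℕ → ℕ) → Set ℕ),
    (∀ i ∈ Finset.Icc 1 r, ∀ α β : ℕ → ℕ,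
      (∀ j, 1 ≤ j → j < i → α j = β j) → F i α = F i β) →
    (∀ i ∈ Finset.Icc 1 r, ∀ α : ℕ → ℕ, (F i α).Infinite) →
    ∀ (κ : Type) [Finite κ] (col : (ℕ → ℕ) → κ),
    (∀ α β : ℕ → ℕ, (∀ i ∈ Finset.Icc 1 r, α i = β i) → col α = col β) →
    ∃ F' : ℕ → (ℕ → ℕ) → Set ℕ,
      (∀ i ∈ Finset.Icc 1 r, ∀ α : ℕ → ℕ, F' i α ⊆ F i α ∧ (F' i α).Infinite) ∧
      (∀ i ∈ Finset.Icc 1 r, ∀ α β : ℕ → ℕ,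
        (∀ j, 1 ≤ j → j < i → α j = β j) → F' i α = F' i β) ∧
      ∃ c₀ : κ, ∀ α : ℕ → ℕ, (∀ i ∈ Finset.Icc 1 r, α i ∈ F' i α) → col α = c₀ := by
  induction r with
  | zero =>
    intro F hdep hinf κ _ col hcol
    exact ⟨F, fun i hi α => ⟨subset_rfl, hinf i hi α⟩, hdep, col (fun _ => 0),
      fun α _ => hcol α (fun _ => 0) (by simp)⟩
  | succ r ih =>
    intro F hdep hinf κ _ col hcol
    set T : (ℕ → ℕ) → (ℕ → ℕ) := fun α j => if 1 ≤ j ∧ j ≤ r then α j else 0 with hTdef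
    have hTeq : ∀ α : ℕ → ℕ, ∀ j, 1 ≤ j → j < r + 1 → T α j = α j := by
      intro α j h1 h2
      simp only [hTdef]
      rw [if_pos (show 1 ≤ j ∧ j ≤ r from ⟨h1, Nat.lt_succ_iff.1 h2⟩)]
    have hTT : ∀ α β : ℕ → ℕ, (∀ j, 1 ≤ j → j < r + 1 → α j = β j) → T α = T β := by
      intro α β h
      funext j
      by_cases hj : 1 ≤ j ∧ j ≤ r
      · simp only [hTdef, if_pos hj]; exact h j hj.1 (Nat.lt_succ_of_le hj.2)
      · simp only [hTdef, if_neg hj]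
    have hmem : (r + 1) ∈ Finset.Icc 1 (r + 1) := by simp
    have hsel : ∀ α : ℕ → ℕ, ∃ c : κ,
        {n | n ∈ F (r + 1) α ∧ col (Function.update α (r + 1) n) = c}.Infinite :=
      fun α => pigeon _ (hinf (r + 1) hmem α) _
    choose c hc using hsel
    set H : (ℕ → ℕ) → Set ℕ := fun γ =>
      {n | n ∈ F (r + 1) γ ∧ col (Function.update γ (r + 1) n) = c γ} with hHdef
    have hHmem : ∀ γ : ℕ → ℕ, ∀ n : ℕ, n ∈ H γ ↔
        n ∈ F (r + 1) γ ∧ col (Function.update γ (r + 1) n) = c γ := by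
      intro γ n; simp [hHdef]
    have hFsame : ∀ α : ℕ → ℕ, F (r + 1) (T α) = F (r + 1) α :=
      fun α => hdep (r + 1) hmem _ _ (hTeq α)
    have hsubIcc : ∀ i : ℕ, i ∈ Finset.Icc 1 r → i ∈ Finset.Icc 1 (r + 1) := by
      intro i hi
      simp only [Finset.mem_Icc] at hi ⊢
      exact ⟨hi.1, hi.2.trans (Nat.le_succ r)⟩
    obtain ⟨F'', h1, h2, c₀, h3⟩ := ih F
      (fun i hi => hdep i (hsubIcc i hi)) (fun i hi => hinf i (hsubIcc i hi))
      κ (fun α => c (T α))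
      (by
        intro α β h
        show c (T α) = c (T β)
        rw [hTT α β (fun j hj1 hj2 => h j (by
          simp only [Finset.mem_Icc]; exact ⟨hj1, Nat.lt_succ_iff.1 hj2⟩))])
    refine ⟨fun i α => if i = r + 1 then H (T α) else F'' i α, ?_, ?_, c₀, ?_⟩
    · intro i hi α
      by_cases h : i = r + 1
      · subst h
        simp only [if_pos rfl]
        constructor
        · intro n hn
          rw [← hFsame α]
          exact ((hHmem (T α) n).1 hn).1
        · exact hc (T α)
      · simp only [if_neg h]
        refine h1 i ?_ α
        simp only [Finset.mem_Icc] at hi ⊢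
        exact ⟨hi.1, Nat.lt_succ_iff.1 (lt_of_le_of_ne hi.2 h)⟩
    · intro i hi α β hab
      by_cases h : i = r + 1
      · subst h
        have hT := hTT α β hab
        simp only [hT, if_true]
      · simp only [if_neg h]
        refine h2 i ?_ α β hab
        simp only [Finset.mem_Icc] at hi ⊢
        exact ⟨hi.1, Nat.lt_succ_iff.1 (lt_of_le_of_ne hi.2 h)⟩
    · intro α hα
      have hr1 : α (r + 1) ∈ H (T α) := by
        have := hα (r + 1) hmem
        simpa only [if_pos rfl, ↓reduceIte] using this
      have hlow : ∀ i ∈ Finset.Icc 1 r, α i ∈ F'' i α := by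
        intro i hi
        have hne : i ≠ r + 1 := by
          simp only [Finset.mem_Icc] at hi
          omega
        have := hα i (hsubIcc i hi)
        simpa only [if_neg hne] using this
      have hcT : c (T α) = c₀ := h3 α hlow
      have hcolα : col α = col (Function.update (T α) (r + 1) (α (r + 1))) := by
        refine hcol _ _ ?_
        intro i hi
        simp only [Finset.mem_Icc] at hi
        by_cases h : i = r + 1
        · subst h; simp [Function.update]
        · rw [Function.update_of_ne h]
          exact (hTeq α i hi.1 (lt_of_le_of_ne hi.2 h)).symm
      rw [hcolα, ((hHmem (T α) (α (r + 1))).1 hr1).2, hcT]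

/-- partition regularity of restricted generalised geometric progressions:
any finite colouring of the admissible tuples can be made monochromatic by shrinking
the restriction maps to infinite subsets. -/
theorem stmt18 (k : ℕ) (hk : 2 ≤ k) (r : ℕ) (x : ℕ → ℚ)
    (F : ℕ → (ℕ → ℕ) → Set ℕ)
    (hdep : ∀ i ∈ Finset.Icc 1 r, ∀ α β : ℕ → ℕ,
      (∀ j, 1 ≤ j → j < i → α j = β j) → F i α = F i β)
    (hinf : ∀ i ∈ Finset.Icc 1 r, ∀ α : ℕ → ℕ, (F i α).Infinite)
    (κ : Type) [Finite κ] (col : (ℕ → ℕ) → κ)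
    (hcol : ∀ α β : ℕ → ℕ, (∀ i ∈ Finset.Icc 1 r, α i = β i) → col α = col β) :
    ∃ F' : ℕ → (ℕ → ℕ) → Set ℕ,
      (∀ i ∈ Finset.Icc 1 r, ∀ α : ℕ → ℕ, F' i α ⊆ F i α ∧ (F' i α).Infinite) ∧
      (∀ i ∈ Finset.Icc 1 r, ∀ α β : ℕ → ℕ,
        (∀ j, 1 ≤ j → j < i → α j = β j) → F' i α = F' i β) ∧
      ∃ c₀ : κ, ∀ α : ℕ → ℕ, (∀ i ∈ Finset.Icc 1 r, α i ∈ F' i α) → col α = c₀ := by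
  exact key r F hdep hinf κ col hcol

end MultAuto
end
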